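/- Define gf2(b,c) := gf(2b+1, b, c, 0)|_{X=Y=1}. Then gf2(b,c) = 2^{2b+1-c} q^{b(2b+1) - c(c-1)/2} * (q^{4b+4}; q^4)_{c-2b-1} / (q^2; q^2)_{c-2b-1} for c \ge 2b+1. -/

import Mathlib

set_option maxHeartbeats 1000000


/-- The field of rational functions in the three indeterminates `X`, `Y`, `q`. -/
noncomputable abbrev MyF : Type := FractionRing (MvPolynomial (Fin 3) ℚ)

/-- The indeterminate `X`. -/
noncomputable def Xv : MyF := algebraMap (MvPolynomial (Fin 3) ℚ) MyF (MvPolynomial.X 0)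
/-- The indeterminate `Y`. -/
noncomputable def Yv : MyF := algebraMap (MvPolynomial (Fin 3) ℚ) MyF (MvPolynomial.X 1)
/-- The indeterminate `q`. -/
noncomputable def qv : MyF := algebraMap (MvPolynomial (Fin 3) ℚ) MyF (MvPolynomial.X 2)

/-- The weight of a lattice path (encoded as a list of steps, `true` = right step,
`false` = down step) starting at a given point: a right step from `(u,v)` to `(u+1,v)`
has weight `(X q^{u-2v} + Y q^{2v-u})/2`, a down step has weight `1`, and the weight
of the path is the product of the weights of its steps. -/
noncomputable def pathWeight (X Y q : MyF) : ℤ × ℤ → List Bool → MyF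
  | _, [] => 1
  | p, true :: s =>
      (X * q ^ (p.1 - 2 * p.2) + Y * q ^ (2 * p.2 - p.1)) / 2 *
        pathWeight X Y q (p.1 + 1, p.2) s
  | p, false :: s => pathWeight X Y q (p.1, p.2 - 1) s

/-- The endpoint of a lattice path (list of steps) starting at a given point. -/
def endpt : ℤ × ℤ → List Bool → ℤ × ℤ
  | p, [] => p
  | p, true :: s => endpt (p.1 + 1, p.2) s
  | p, false :: s => endpt (p.1, p.2 - 1) s

/-- `gf X Y q a b c d` is the generating function of all lattice paths from `(a,b)`
to `(c,d)` with unit steps to the right and downwards, weighted as in `pathWeight`.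
(Any such path has exactly `c-a` right steps and `b-d` down steps, hence length
`(c-a)+(b-d)`; the sum ranges over all step sequences of that length ending at
`(c,d)`.  In particular `gf X Y q a b c d = 0` when `a > c` or `b < d`.) -/
noncomputable def gf (X Y q : MyF) (a b c d : ℤ) : MyF :=
  ∑ s : Fin ((c - a) + (b - d)).toNat → Bool,
    if endpt (a, b) (List.ofFn s) = (c, d) then pathWeight X Y q (a, b) (List.ofFn s) else 0

/-- q-Pochhammer symbol `(a; q)_n = ∏_{j=0}^{n-1} (1 - a q^j)`. -/
noncomputable def qPoch (a q : MyF) (n : ℕ) : MyF :=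
  ∏ j ∈ Finset.range n, (1 - a * q ^ j)

/-! ### Auxiliary development -/

/-- The weight of a right step at `(u,v)`, specialized at `X = Y = 1`. -/
noncomputable def wt (u v : ℤ) : MyF := (qv ^ (u - 2 * v) + qv ^ (2 * v - u)) / 2

/-- Recursive description of the generating function (first-step decomposition),
with the number of steps as explicit fuel. -/
noncomputable def G : ℕ → ℤ → ℤ → ℤ → ℤ → MyF
  | 0, a, b, c, d => if a = c ∧ b = d then 1 else 0
  | n + 1, a, b, c, d => wt a b * G n (a + 1) b c d + G n a (b - 1) c d

/-- `gf` at `X = Y = 1` as a sum over paths with an explicit number of steps. -/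
noncomputable def gfAux (n : ℕ) (a b c d : ℤ) : MyF :=
  ∑ s : Fin n → Bool,
    if endpt (a, b) (List.ofFn s) = (c, d) then pathWeight 1 1 qv (a, b) (List.ofFn s) else 0

lemma gf_eq_gfAux (a b c d : ℤ) :
    gf 1 1 qv a b c d = gfAux ((c - a) + (b - d)).toNat a b c d := rfl

lemma gfAux_eq_G (n : ℕ) : ∀ a b c d : ℤ, gfAux n a b c d = G n a b c d := by
  induction n with
  | zero =>
      intro a b c d
      rw [gfAux, G]
      rw [Fintype.sum_eq_single (fun i : Fin 0 => false) (by intro x hx; exact absurd (funext fun i => i.elim0) hx)]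
      simp [endpt, pathWeight, Prod.ext_iff]
  | succ n ih =>
      intro a b c d
      rw [gfAux, ← Equiv.sum_comp (Fin.consEquiv (fun _ : Fin (n+1) => Bool)),
        Fintype.sum_prod_type, Fintype.sum_bool]
      have hofn : ∀ (x : Bool) (g : Fin n → Bool),
          List.ofFn ((Fin.consEquiv (fun _ : Fin (n+1) => Bool)) (x, g)) = x :: List.ofFn g := by
        intro x g
        rw [List.ofFn_succ]
        simp [Fin.consEquiv]
      rw [G, ← ih, ← ih]
      rw [gfAux, gfAux, Finset.mul_sum]
      congr 1
      · apply Finset.sum_congr rfl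
        intro g _
        rw [hofn]
        show (if endpt (a + 1, b) (List.ofFn g) = (c, d) then
            (1 * qv ^ (a - 2 * b) + 1 * qv ^ (2 * b - a)) / 2 *
              pathWeight 1 1 qv (a + 1, b) (List.ofFn g) else 0) = _
        rw [mul_ite, mul_zero]
        congr 1
        unfold wt
        ring
      · apply Finset.sum_congr rfl
        intro g _
        rw [hofn]
        rfl

lemma gf_eq_G (n : ℕ) (a b c d : ℤ) (h : ((c - a) + (b - d)).toNat = n) :
    gf 1 1 qv a b c d = G n a b c d := by
  rw [gf_eq_gfAux, h, gfAux_eq_G]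

lemma G_shift (n : ℕ) : ∀ a b c d : ℤ,
    G n (a + 2) (b + 1) (c + 2) (d + 1) = G n a b c d := by
  induction n with
  | zero => intro a b c d; simp [G]
  | succ n ih =>
      intro a b c d
      rw [G, G]
      have h1 : a + 2 + 1 = (a + 1) + 2 := by ring
      have h2 : b + 1 - 1 = (b - 1) + 1 := by ring
      have h3 : wt (a + 2) (b + 1) = wt a b := by
        unfold wt
        have : a + 2 - 2 * (b + 1) = a - 2 * b := by ring
        rw [this]
        have : 2 * (b + 1) - (a + 2) = 2 * b - a := by ring
        rw [this]
      rw [h1, h2, h3, ih, ih]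

lemma G_zero_of_lt (n : ℕ) : ∀ a b c d : ℤ, b < d → G n a b c d = 0 := by
  induction n with
  | zero => intro a b c d h; rw [G, if_neg]; rintro ⟨-, h2⟩; omega
  | succ n ih =>
      intro a b c d h
      rw [G, ih _ _ _ _ h, ih _ _ _ _ (by omega), mul_zero, add_zero]

lemma G_zero_of_gt (n : ℕ) : ∀ a b c d : ℤ, c < a → G n a b c d = 0 := by
  induction n with
  | zero => intro a b c d h; rw [G, if_neg]; rintro ⟨h1, -⟩; omega
  | succ n ih =>
      intro a b c d h
      rw [G, ih _ _ _ _ (by omega), ih _ _ _ _ h, mul_zero, add_zero]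

lemma G_diag (n : ℕ) : ∀ a : ℤ, G n a n a 0 = 1 := by
  induction n with
  | zero => intro a; simp [G]
  | succ n ih =>
      intro a
      rw [G, G_zero_of_gt _ _ _ _ _ (by omega)]
      have : ((n : ℤ) + 1) - 1 = (n : ℤ) := by ring
      push_cast
      rw [this, ih, mul_zero, zero_add]

lemma G_laststep (n : ℕ) : ∀ a b c d : ℤ, (c - a) + (b - d) = (n : ℤ) + 1 →
    G (n + 1) a b c d = wt (c - 1) d * G n a b (c - 1) d + G n a b c (d + 1) := by
  induction n with
  | zero =>
      intro a b c d h
      rw [G, G, G, G, G]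
      split_ifs with h1 h2 h3 h4 <;>
        first
          | omega
          | ring1
          | (rw [show c - 1 = a by omega, show d = b by omega]; ring1)
          | (rw [show c - 1 = a by omega, show d = b by omega])
  | succ n ih =>
      intro a b c d h
      rw [show n + 1 + 1 = (n + 1) + 1 from rfl, G,
        ih (a + 1) b c d (by omega), ih a (b - 1) c d (by omega), G, G]
      ring

/-- The closed form. -/
noncomputable def Phi (b c : ℕ) : MyF :=
  (2 : MyF) ^ (2 * (b : ℤ) + 1 - (c : ℤ)) *
    qv ^ ((b : ℤ) * (2 * (b : ℤ) + 1) - (c : ℤ) * ((c : ℤ) - 1) / 2) *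
    qPoch (qv ^ (4 * b + 4)) (qv ^ 4) (c - 2 * b - 1) /
      qPoch (qv ^ 2) (qv ^ 2) (c - 2 * b - 1)

lemma qv_ne_zero : qv ≠ 0 := by
  have hinj := IsFractionRing.injective (MvPolynomial (Fin 3) ℚ) MyF
  rw [qv, Ne, map_eq_zero_iff _ hinj]
  exact MvPolynomial.X_ne_zero _

lemma myF_two_ne_zero : (2 : MyF) ≠ 0 := by
  have : CharZero MyF :=
    charZero_of_injective_algebraMap (IsFractionRing.injective (MvPolynomial (Fin 3) ℚ) MyF)
  exact two_ne_zero

lemma one_sub_qv_pow_ne_zero (m : ℕ) (hm : 1 ≤ m) : (1 : MyF) - qv ^ m ≠ 0 := by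
  have hinj := IsFractionRing.injective (MvPolynomial (Fin 3) ℚ) MyF
  intro h
  have h1 : qv ^ m = 1 := by
    have := sub_eq_zero.mp h
    exact this.symm
  rw [qv, ← map_pow, show (1 : MyF) = algebraMap (MvPolynomial (Fin 3) ℚ) MyF 1 from (map_one _).symm] at h1
  have h2 := hinj h1
  have h3 := congrArg MvPolynomial.constantCoeff h2
  rw [map_pow, MvPolynomial.constantCoeff_X, map_one, zero_pow (by omega)] at h3
  exact zero_ne_one h3

lemma qPochD_ne_zero (n : ℕ) : qPoch (qv ^ 2) (qv ^ 2) n ≠ 0 := by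
  rw [qPoch]
  apply Finset.prod_ne_zero_iff.mpr
  intro j _
  have : (qv ^ 2) * (qv ^ 2) ^ j = qv ^ (2 + 2 * j) := by
    rw [← pow_mul, ← pow_add]
  rw [this]
  exact one_sub_qv_pow_ne_zero _ (by omega)

lemma qPoch_succ (a q : MyF) (n : ℕ) :
    qPoch a q (n + 1) = qPoch a q n * (1 - a * q ^ n) := Finset.prod_range_succ _ _

lemma qPoch_succ' (a q : MyF) (n : ℕ) :
    qPoch a q (n + 1) = (1 - a) * qPoch (a * q) q n := by
  rw [qPoch, Finset.prod_range_succ']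
  rw [pow_zero, mul_one, mul_comm]
  congr 1
  apply Finset.prod_congr rfl
  intro j _
  rw [mul_assoc, ← pow_succ']

lemma ediv_step (y : ℤ) : y * (y - 1) / 2 = (y - 1) * (y - 2) / 2 + (y - 1) := by
  have h : y * (y - 1) = (y - 1) * (y - 2) + (y - 1) * 2 := by ring
  rw [h, Int.add_mul_ediv_right _ _ (by norm_num)]

lemma Phi_diag (b : ℕ) : Phi b (2 * b + 1) = 1 := by
  rw [Phi]
  have h1 : 2 * b + 1 - 2 * b - 1 = 0 := by omega
  rw [h1, qPoch, qPoch, Finset.prod_range_zero, Finset.prod_range_zero]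
  have h2 : 2 * (b : ℤ) + 1 - ((2 * b + 1 : ℕ) : ℤ) = 0 := by push_cast; ring
  have h3 : (b : ℤ) * (2 * (b : ℤ) + 1) - ((2 * b + 1 : ℕ) : ℤ) * (((2 * b + 1 : ℕ) : ℤ) - 1) / 2 = 0 := by
    push_cast
    have : (2 * (b : ℤ) + 1) * (2 * (b : ℤ) + 1 - 1) = ((b : ℤ) * (2 * (b : ℤ) + 1)) * 2 := by ring
    rw [this, Int.mul_ediv_cancel _ (by norm_num)]
    ring
  rw [h2, h3, zpow_zero, zpow_zero]
  norm_num

lemma nat_tri (m : ℕ) : (m + 1 + 1) * (m + 1) / 2 = (m + 1) * m / 2 + (m + 1) := by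
  rw [show (m + 1 + 1) * (m + 1) = (m + 1) * m + (m + 1) * 2 by ring,
    Nat.add_mul_div_right _ _ (by norm_num : 0 < 2)]

lemma qv_pow_ne_zero (m : ℕ) : qv ^ m ≠ 0 := pow_ne_zero _ qv_ne_zero

lemma Phi_eq (b c : ℕ) (h : 2 * b + 1 ≤ c) :
    Phi b c = qv ^ (b * (2 * b + 1)) *
      qPoch (qv ^ (4 * b + 4)) (qv ^ 4) (c - 2 * b - 1) /
        (qv ^ (c * (c - 1) / 2) * (2 : MyF) ^ (c - 2 * b - 1) *
          qPoch (qv ^ 2) (qv ^ 2) (c - 2 * b - 1)) := by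
  have h1 : ((c - 1 : ℕ) : ℤ) = (c : ℤ) - 1 := by omega
  have h2 : ((c * (c - 1) / 2 : ℕ) : ℤ) = (c : ℤ) * ((c : ℤ) - 1) / 2 := by
    rw [Int.natCast_div, Nat.cast_mul, h1]
    norm_num
  have h3 : qv ^ ((b : ℤ) * (2 * (b : ℤ) + 1) - (c : ℤ) * ((c : ℤ) - 1) / 2) =
      qv ^ (b * (2 * b + 1)) / qv ^ (c * (c - 1) / 2) := by
    rw [show (b : ℤ) * (2 * (b : ℤ) + 1) - (c : ℤ) * ((c : ℤ) - 1) / 2 =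
        ((b * (2 * b + 1) : ℕ) : ℤ) - ((c * (c - 1) / 2 : ℕ) : ℤ) by rw [h2]; push_cast; ring,
      zpow_sub₀ qv_ne_zero, zpow_natCast, zpow_natCast]
  have h4 : (2 : MyF) ^ (2 * (b : ℤ) + 1 - (c : ℤ)) = ((2 : MyF) ^ (c - 2 * b - 1))⁻¹ := by
    rw [show 2 * (b : ℤ) + 1 - (c : ℤ) = -((c - 2 * b - 1 : ℕ) : ℤ) by omega,
      zpow_neg, zpow_natCast]
  rw [Phi, h3, h4]
  ring

lemma two_pow_ne_zero' (m : ℕ) : (2 : MyF) ^ m ≠ 0 := pow_ne_zero _ myF_two_ne_zero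

lemma wt_eval (m : ℕ) : wt (((m + 1 : ℕ) : ℤ) - 1) 0 = (qv ^ (2 * m) + 1) / (2 * qv ^ m) := by
  rw [wt, show ((m + 1 : ℕ) : ℤ) - 1 - 2 * 0 = ((m : ℕ) : ℤ) by push_cast; ring,
    show 2 * 0 - (((m + 1 : ℕ) : ℤ) - 1) = -((m : ℕ) : ℤ) by push_cast; ring,
    zpow_neg, zpow_natCast]
  rw [div_eq_div_iff myF_two_ne_zero (mul_ne_zero myF_two_ne_zero (qv_pow_ne_zero m))]
  have hi : (qv ^ m)⁻¹ * qv ^ m = 1 := inv_mul_cancel₀ (qv_pow_ne_zero m)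
  linear_combination (2 : MyF) * hi

lemma Phi_rec0 (k : ℕ) :
    Phi 0 (2 + k) = wt (((2 + k : ℕ) : ℤ) - 1) 0 * Phi 0 (1 + k) := by
  rw [Phi_eq 0 (2 + k) (by omega), Phi_eq 0 (1 + k) (by omega),
    show ((2 + k : ℕ) : ℤ) - 1 = (((1 + k) + 1 : ℕ) : ℤ) - 1 by push_cast; ring,
    wt_eval (1 + k)]
  rw [show 2 + k - 2 * 0 - 1 = k + 1 by omega, show 1 + k - 2 * 0 - 1 = k by omega,
    show 2 + k - 1 = 1 + k by omega, show 1 + k - 1 = k by omega]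
  have t1 : (2 + k) * (1 + k) / 2 = (1 + k) * k / 2 + (1 + k) := by
    rw [show 2 + k = k + 1 + 1 by omega, show 1 + k = k + 1 by omega]
    exact nat_tri k
  rw [t1]
  have hD : qPoch (qv ^ 2) (qv ^ 2) (k + 1) = qPoch (qv ^ 2) (qv ^ 2) k * (1 - qv ^ (2 * k + 2)) := by
    rw [qPoch_succ, ← pow_mul, ← pow_add]
    try ring_nf
  have hP : qPoch (qv ^ (4 * 0 + 4)) (qv ^ 4) (k + 1) =
      qPoch (qv ^ (4 * 0 + 4)) (qv ^ 4) k * (1 - qv ^ (4 * k + 4)) := by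
    rw [qPoch_succ, ← pow_mul, ← pow_add]
    try ring_nf
  rw [hD, hP]
  have hDk := qPochD_ne_zero k
  have h1 := one_sub_qv_pow_ne_zero (2 * k + 2) (by omega)
  have h2 := myF_two_ne_zero
  field_simp [qv_pow_ne_zero, two_pow_ne_zero']
  ring

lemma Phi_rec (b k : ℕ) :
    Phi (b + 1) (2 * b + 4 + k) =
      wt (((2 * b + 4 + k : ℕ) : ℤ) - 1) 0 * Phi (b + 1) (2 * b + 3 + k) + Phi b (2 * b + 2 + k) := by
  rw [Phi_eq (b + 1) (2 * b + 4 + k) (by omega), Phi_eq (b + 1) (2 * b + 3 + k) (by omega),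
    Phi_eq b (2 * b + 2 + k) (by omega),
    show ((2 * b + 4 + k : ℕ) : ℤ) - 1 = (((2 * b + 3 + k) + 1 : ℕ) : ℤ) - 1 by push_cast; ring,
    wt_eval (2 * b + 3 + k)]
  rw [show 2 * b + 4 + k - 2 * (b + 1) - 1 = k + 1 by omega,
    show 2 * b + 3 + k - 2 * (b + 1) - 1 = k by omega,
    show 2 * b + 2 + k - 2 * b - 1 = k + 1 by omega,
    show 2 * b + 4 + k - 1 = 2 * b + 3 + k by omega,
    show 2 * b + 3 + k - 1 = 2 * b + 2 + k by omega,
    show 2 * b + 2 + k - 1 = 2 * b + 1 + k by omega,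
    show 4 * (b + 1) + 4 = 4 * b + 8 by ring,
    show (b + 1) * (2 * (b + 1) + 1) = b * (2 * b + 1) + (4 * b + 3) by ring]
  have t1 : (2 * b + 4 + k) * (2 * b + 3 + k) / 2
      = (2 * b + 3 + k) * (2 * b + 2 + k) / 2 + (2 * b + 3 + k) := by
    rw [show 2 * b + 4 + k = (2 * b + 2 + k) + 1 + 1 by omega,
      show 2 * b + 3 + k = (2 * b + 2 + k) + 1 by omega]
    exact nat_tri _
  have t2 : (2 * b + 3 + k) * (2 * b + 2 + k) / 2
      = (2 * b + 2 + k) * (2 * b + 1 + k) / 2 + (2 * b + 2 + k) := by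
    rw [show 2 * b + 3 + k = (2 * b + 1 + k) + 1 + 1 by omega,
      show 2 * b + 2 + k = (2 * b + 1 + k) + 1 by omega]
    exact nat_tri _
  rw [t1, t2]
  obtain ⟨E, hE⟩ : ∃ E : MyF, E = 1 - qv ^ (2 * k + 2) := ⟨_, rfl⟩
  have hD : qPoch (qv ^ 2) (qv ^ 2) (k + 1) = qPoch (qv ^ 2) (qv ^ 2) k * E := by
    rw [hE, qPoch_succ, ← pow_mul, ← pow_add]
    try ring_nf
  have hP : qPoch (qv ^ (4 * b + 8)) (qv ^ 4) (k + 1) =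
      qPoch (qv ^ (4 * b + 8)) (qv ^ 4) k * (1 - qv ^ (4 * b + 8 + 4 * k)) := by
    rw [qPoch_succ, ← pow_mul, ← pow_add]
    try ring_nf
  have hQ : qPoch (qv ^ (4 * b + 4)) (qv ^ 4) (k + 1) =
      (1 - qv ^ (4 * b + 4)) * qPoch (qv ^ (4 * b + 8)) (qv ^ 4) k := by
    rw [qPoch_succ', ← pow_add]
    try norm_num
  rw [hD, hP, hQ]
  have hDk := qPochD_ne_zero k
  have h1 : E ≠ 0 := by rw [hE]; exact one_sub_qv_pow_ne_zero (2 * k + 2) (by omega)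
  have h2 := myF_two_ne_zero
  rw [div_mul_div_comm]
  have hd1 : qv ^ ((2 * b + 2 + k) * (2 * b + 1 + k) / 2 + (2 * b + 2 + k) + (2 * b + 3 + k)) * 2 ^ (k + 1) *
      (qPoch (qv ^ 2) (qv ^ 2) k * E) ≠ 0 :=
    mul_ne_zero (mul_ne_zero (qv_pow_ne_zero _) (two_pow_ne_zero' _)) (mul_ne_zero hDk h1)
  have hd2 : 2 * qv ^ (2 * b + 3 + k) *
      (qv ^ ((2 * b + 2 + k) * (2 * b + 1 + k) / 2 + (2 * b + 2 + k)) * 2 ^ k * qPoch (qv ^ 2) (qv ^ 2) k) ≠ 0 :=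
    mul_ne_zero (mul_ne_zero h2 (qv_pow_ne_zero _))
      (mul_ne_zero (mul_ne_zero (qv_pow_ne_zero _) (two_pow_ne_zero' _)) hDk)
  have hd3 : qv ^ ((2 * b + 2 + k) * (2 * b + 1 + k) / 2) * 2 ^ (k + 1) *
      (qPoch (qv ^ 2) (qv ^ 2) k * E) ≠ 0 :=
    mul_ne_zero (mul_ne_zero (qv_pow_ne_zero _) (two_pow_ne_zero' _)) (mul_ne_zero hDk h1)
  rw [div_add_div _ _ hd2 hd3, div_eq_div_iff hd1 (mul_ne_zero hd2 hd3), hE]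
  ring

lemma main_aux (c : ℕ) : ∀ b : ℕ, 2 * b + 1 ≤ c →
    G (c - b - 1) (2 * (b : ℤ) + 1) (b : ℤ) (c : ℤ) 0 = Phi b c := by
  induction c using Nat.strong_induction_on with
  | _ c ih =>
    intro b hbc
    rcases eq_or_lt_of_le hbc with hc | hc
    · -- base case c = 2b+1
      subst hc
      have h1 : 2 * b + 1 - b - 1 = b := by omega
      rw [h1, Phi_diag]
      have := G_diag b (2 * (b : ℤ) + 1)
      have h2 : ((2 * b + 1 : ℕ) : ℤ) = 2 * (b : ℤ) + 1 := by push_cast; ring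
      rw [h2]
      exact this
    · -- step case c ≥ 2b+2
      have hc2 : 2 * b + 2 ≤ c := hc
      have hfuel : c - b - 1 = (c - b - 2) + 1 := by omega
      rw [hfuel, G_laststep _ _ _ _ _ (by push_cast; omega)]
      have hcm1 : (c : ℤ) - 1 = ((c - 1 : ℕ) : ℤ) := by omega
      have hG1 : G (c - b - 2) (2 * (b : ℤ) + 1) (b : ℤ) ((c : ℤ) - 1) 0 = Phi b (c - 1) := by
        rw [hcm1]
        have := ih (c - 1) (by omega) b (by omega)
        rwa [show (c - 1) - b - 1 = c - b - 2 by omega] at this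
      rw [hG1]
      rcases b with _ | b'
      · -- b = 0
        rw [G_zero_of_lt _ _ _ _ _ (by norm_num), add_zero]
        obtain ⟨k, rfl⟩ : ∃ k, c = 2 + k := ⟨c - 2, by omega⟩
        have := Phi_rec0 k
        rw [show 2 + k - 1 = 1 + k by omega]
        exact this.symm
      · -- b = b' + 1
        have hG2 : G (c - (b' + 1) - 2) (2 * ((b' + 1 : ℕ) : ℤ) + 1) ((b' + 1 : ℕ) : ℤ) (c : ℤ) 1
            = Phi b' (c - 2) := by
          have hsh := G_shift (c - (b' + 1) - 2) (2 * (b' : ℤ) + 1) (b' : ℤ) ((c - 2 : ℕ) : ℤ) 0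
          have e1 : (2 * (b' : ℤ) + 1) + 2 = 2 * ((b' + 1 : ℕ) : ℤ) + 1 := by push_cast; ring
          have e2 : (b' : ℤ) + 1 = ((b' + 1 : ℕ) : ℤ) := by push_cast; ring
          have e3 : ((c - 2 : ℕ) : ℤ) + 2 = (c : ℤ) := by omega
          have e4 : (0 : ℤ) + 1 = 1 := by ring
          rw [e1, e2, e3, e4] at hsh
          rw [hsh]
          have := ih (c - 2) (by omega) b' (by omega)
          rwa [show (c - 2) - b' - 1 = c - (b' + 1) - 2 by omega] at this
        rw [show ((0:ℤ) + 1) = 1 by norm_num, hG2]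
        obtain ⟨k, rfl⟩ : ∃ k, c = 2 * b' + 4 + k := ⟨c - (2 * b' + 4), by omega⟩
        have := Phi_rec b' k
        rw [show 2 * b' + 4 + k - 1 = 2 * b' + 3 + k by omega,
          show 2 * b' + 4 + k - 2 = 2 * b' + 2 + k by omega]
        exact this.symm

/-- With `gf2(b,c) := gf(2b+1, b, c, 0)|_{X=Y=1}`, for `c ≥ 2b+1` one has
`gf2(b,c) = 2^{2b+1-c} q^{b(2b+1) - c(c-1)/2} (q^{4b+4};q⁴)_{c-2b-1} / (q²;q²)_{c-2b-1}`. -/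
theorem gf_quarter_odd_eval (b c : ℕ) (hbc : 2 * b + 1 ≤ c) :
    gf 1 1 qv (2 * (b : ℤ) + 1) (b : ℤ) (c : ℤ) 0 =
      (2 : MyF) ^ (2 * (b : ℤ) + 1 - (c : ℤ)) *
        qv ^ ((b : ℤ) * (2 * (b : ℤ) + 1) - (c : ℤ) * ((c : ℤ) - 1) / 2) *
        qPoch (qv ^ (4 * b + 4)) (qv ^ 4) (c - 2 * b - 1) /
          qPoch (qv ^ 2) (qv ^ 2) (c - 2 * b - 1) := by
  rw [gf_eq_G (c - b - 1) _ _ _ _ (by omega)]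
  exact main_aux c b hbc
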